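/- arXiv:quant-ph/0301072 — 2 statements merged into one kernel-verified Lean document; each statement's English description precedes it below -/
import Mathlib

section
/- Let d₁ be a divisor of d, and let c ∈ ℂ^d be given by c_l = α · η^{βl} · δ_{0,(l+γ) mod d₁} for some nonzero α ∈ ℂ, integers β, γ, and η = e^{2πi/d}. Then |supp(c)| · |supp(ĉ)| = d, i.e., c achieves equality in the discrete support uncertainty relation. -/
open scoped BigOperators Classical ComplexOrder

/-- The primitive `d`-th root of unity `η = e^{2πi/d}`. -/
noncomputable def eta (d : ℕ) : ℂ := Complex.exp (2 * (Real.pi : ℂ) * Complex.I / d)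

/-- Discrete Fourier transform: `ĉ_k = (1/√d) Σ_l η^{kl} c_l`. -/
noncomputable def dft (d : ℕ) (c : Fin d → ℂ) : Fin d → ℂ := fun k =>
  (1 / (Real.sqrt d : ℂ)) * ∑ l : Fin d, eta d ^ ((k : ℕ) * (l : ℕ)) * c l

/-- Number of nonzero components of a vector. -/
noncomputable def suppCard (d : ℕ) (c : Fin d → ℂ) : ℕ :=
  (Finset.univ.filter fun l => c l ≠ 0).card

lemma residue_sum (d e : ℕ) (he : e ∣ d) (hd : 0 < d) (γ : ℤ) (f : ℕ → ℂ) :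
    ∑ l : Fin d, (if ((l : ℤ) + γ) % (e : ℤ) = 0 then f l else 0)
      = ∑ m : Fin (d / e), f (((-γ) % (e : ℤ)).toNat + e * m) := by
  have he0 : 0 < e := Nat.pos_of_dvd_of_pos he hd
  have heZ : (0:ℤ) < (e:ℤ) := by exact_mod_cast he0
  set l₀ : ℕ := ((-γ) % (e : ℤ)).toNat with hl₀
  have hl₀Z : (l₀ : ℤ) = (-γ) % (e : ℤ) := Int.toNat_of_nonneg (Int.emod_nonneg _ heZ.ne')
  have hl₀lt : l₀ < e := by
    have := Int.emod_lt_of_pos (-γ) heZ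
    omega
  have hed : e * (d / e) = d := Nat.mul_div_cancel' he
  have key : ∀ l : ℕ, (((l : ℤ) + γ) % (e : ℤ) = 0 ↔ l % e = l₀) := by
    intro l
    have h1 : ((l % e : ℕ) : ℤ) = (l : ℤ) % (e : ℤ) := Int.natCast_emod l e
    have h2 : (l : ℤ) % (e:ℤ) = (-γ) % (e:ℤ) ↔ ((l:ℤ) - (-γ)) % (e:ℤ) = 0 :=
      Int.emod_eq_emod_iff_emod_sub_eq_zero
    have h3 : (l:ℤ) - (-γ) = (l:ℤ) + γ := by ring
    rw [h3] at h2
    omega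
  rw [← Finset.sum_filter]
  refine Finset.sum_bij' (i := fun (l : Fin d) _ => (⟨(l : ℕ) / e, ?_⟩ : Fin (d / e)))
    (j := fun (m : Fin (d / e)) _ => (⟨l₀ + e * (m : ℕ), ?_⟩ : Fin d)) ?_ ?_ ?_ ?_ ?_
  · exact Nat.div_lt_div_of_lt_of_dvd he l.isLt
  · calc l₀ + e * (m : ℕ) < e + e * (m : ℕ) := by omega
      _ = e * ((m : ℕ) + 1) := by ring
      _ ≤ e * (d / e) := Nat.mul_le_mul_left e m.isLt
      _ = d := hed
  · intro l _; exact Finset.mem_univ _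
  · intro m _
    simp only [Finset.mem_filter, Finset.mem_univ, true_and]
    rw [key]
    simp [Nat.add_mul_mod_self_left, Nat.mod_eq_of_lt hl₀lt]
  · intro l hl
    simp only [Finset.mem_filter, Finset.mem_univ, true_and] at hl
    rw [key] at hl
    apply Fin.ext
    simp only
    rw [← hl, Nat.mul_comm]
    exact Nat.mod_add_div' (l : ℕ) e
  · intro m _
    apply Fin.ext
    simp only
    rw [Nat.add_mul_div_left _ _ he0, Nat.div_eq_of_lt hl₀lt, zero_add]
  · intro l hl
    simp only [Finset.mem_filter, Finset.mem_univ, true_and] at hl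
    rw [key] at hl
    congr 1
    show (l : ℕ) = l₀ + e * ((l : ℕ) / e)
    rw [← hl, Nat.mul_comm]
    exact (Nat.mod_add_div' (l : ℕ) e).symm

lemma residue_count (d e : ℕ) (he : e ∣ d) (hd : 0 < d) (γ : ℤ) :
    (Finset.univ.filter fun l : Fin d => ((l : ℤ) + γ) % (e : ℤ) = 0).card = d / e := by
  have h := residue_sum d e he hd γ (fun _ => (1 : ℂ))
  simp only [Finset.sum_boole, Finset.sum_const, Finset.card_univ, Fintype.card_fin,
    nsmul_eq_mul, mul_one] at h
  exact_mod_cast h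


lemma eta_prim (d : ℕ) (hd : 0 < d) : IsPrimitiveRoot (eta d) d :=
  Complex.isPrimitiveRoot_exp d hd.ne'

lemma eta_ne_zero (d : ℕ) : eta d ≠ 0 := Complex.exp_ne_zero _

lemma dft_ne_zero_iff (d d₁ : ℕ) (hd : 0 < d) (hdvd : d₁ ∣ d) (α : ℂ) (hα : α ≠ 0)
    (β γ : ℤ) (c : Fin d → ℂ)
    (hc : ∀ l : Fin d, c l =
      α * eta d ^ (β * (l : ℕ)) * (if ((l : ℕ) + γ) % (d₁ : ℤ) = 0 then 1 else 0))
    (k : Fin d) :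
    dft d c k ≠ 0 ↔ ((k : ℤ) + β) % ((d / d₁ : ℕ) : ℤ) = 0 := by
  have hη := eta_ne_zero d
  have hd₁ : 0 < d₁ := Nat.pos_of_dvd_of_pos hdvd hd
  set n : ℕ := d / d₁ with hn
  have hn0 : 0 < n := Nat.div_pos (Nat.le_of_dvd hd hdvd) hd₁
  have hnd : d = d₁ * n := (Nat.mul_div_cancel' hdvd).symm
  set l₀ : ℕ := ((-γ) % (d₁ : ℤ)).toNat with hl₀
  set z : ℂ := eta d ^ (((k : ℤ) + β) * (d₁ : ℤ)) with hz
  -- rewrite each summand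
  have hterm : ∀ l : Fin d, eta d ^ ((k : ℕ) * (l : ℕ)) * c l =
      if ((l : ℤ) + γ) % (d₁ : ℤ) = 0 then
        α * eta d ^ (((k : ℤ) + β) * ((l : ℕ) : ℤ)) else 0 := by
    intro l
    rw [hc l]
    split_ifs with h
    · rw [mul_one]
      have hexp : ((k : ℤ) + β) * ((l : ℕ) : ℤ) =
          (((k : ℕ) * (l : ℕ) : ℕ) : ℤ) + β * ((l : ℕ) : ℤ) := by push_cast; ring
      rw [hexp, zpow_add₀ hη, zpow_natCast]
      ring
    · ring
  have hsum : (∑ l : Fin d, eta d ^ ((k : ℕ) * (l : ℕ)) * c l) =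
      α * eta d ^ (((k : ℤ) + β) * (l₀ : ℤ)) * ∑ m : Fin n, z ^ (m : ℕ) := by
    calc (∑ l : Fin d, eta d ^ ((k : ℕ) * (l : ℕ)) * c l)
        = ∑ l : Fin d, (if ((l : ℤ) + γ) % (d₁ : ℤ) = 0 then
            α * eta d ^ (((k : ℤ) + β) * ((l : ℕ) : ℤ)) else 0) := by
          exact Finset.sum_congr rfl (fun l _ => hterm l)
      _ = ∑ m : Fin n, α * eta d ^ (((k : ℤ) + β) * ((l₀ + d₁ * (m : ℕ) : ℕ) : ℤ)) :=
          residue_sum d d₁ hdvd hd γ (fun l => α * eta d ^ (((k : ℤ) + β) * (l : ℤ)))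
      _ = ∑ m : Fin n, α * eta d ^ (((k : ℤ) + β) * (l₀ : ℤ)) * z ^ (m : ℕ) := by
          refine Finset.sum_congr rfl (fun m _ => ?_)
          have hexp : ((k : ℤ) + β) * ((l₀ + d₁ * (m : ℕ) : ℕ) : ℤ) =
              ((k : ℤ) + β) * (l₀ : ℤ) + (((k : ℤ) + β) * (d₁ : ℤ)) * ((m : ℕ) : ℤ) := by
            push_cast; ring
          have hzm : z ^ (m : ℕ) = eta d ^ ((((k : ℤ) + β) * (d₁ : ℤ)) * ((m : ℕ) : ℤ)) := by
            rw [hz, ← zpow_natCast (eta d ^ (((k : ℤ) + β) * (d₁ : ℤ))) (m : ℕ), ← zpow_mul]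
          rw [hexp, zpow_add₀ hη, hzm]
          ring
      _ = α * eta d ^ (((k : ℤ) + β) * (l₀ : ℤ)) * ∑ m : Fin n, z ^ (m : ℕ) := by
          rw [Finset.mul_sum]
  -- primitive root of order n
  have hζ : IsPrimitiveRoot (eta d ^ d₁) n := (eta_prim d hd).pow hd hnd
  have hz_eq : z = (eta d ^ d₁) ^ ((k : ℤ) + β) := by
    rw [hz, mul_comm, zpow_mul, zpow_natCast]
  have hz_one : z = 1 ↔ ((n : ℤ) ∣ ((k : ℤ) + β)) := by
    rw [hz_eq]; exact hζ.zpow_eq_one_iff_dvd _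
  have hgeom : (∑ m : Fin n, z ^ (m : ℕ)) = if (n : ℤ) ∣ ((k : ℤ) + β) then (n : ℂ) else 0 := by
    rw [Fin.sum_univ_eq_sum_range (fun m => z ^ m) n]
    split_ifs with h
    · rw [hz_one.mpr h]
      simp
    · have hzne : z ≠ 1 := fun hh => h (hz_one.mp hh)
      have hzn : z ^ n = 1 := by
        rw [hz_eq, ← zpow_natCast _ n, ← zpow_mul, mul_comm, zpow_mul, zpow_natCast,
          hζ.pow_eq_one, one_zpow]
      rw [geom_sum_eq hzne, hzn, sub_self, zero_div]
  have hsqrt : (Real.sqrt d : ℂ) ≠ 0 := by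
    simp only [ne_eq, Complex.ofReal_eq_zero]
    exact (Real.sqrt_pos.mpr (by exact_mod_cast hd)).ne'
  have hdvd_iff : (n : ℤ) ∣ ((k : ℤ) + β) ↔ ((k : ℤ) + β) % ((n : ℕ) : ℤ) = 0 :=
    ⟨Int.emod_eq_zero_of_dvd, Int.dvd_of_emod_eq_zero⟩
  rw [dft, hsum, hgeom]
  split_ifs with h
  · have hne : (1 / (Real.sqrt d : ℂ)) *
        (α * eta d ^ (((k : ℤ) + β) * ((l₀ : ℕ) : ℤ)) * (n : ℂ)) ≠ 0 := by
      apply mul_ne_zero (one_div_ne_zero hsqrt)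
      exact mul_ne_zero (mul_ne_zero hα (zpow_ne_zero _ hη)) (by exact_mod_cast hn0.ne')
    exact iff_of_true hne (hdvd_iff.mp h)
  · rw [mul_zero, mul_zero]
    exact iff_of_false (by simp) (fun hh => h (hdvd_iff.mpr hh))

theorem support_uncertainty_equality_of_form (d d₁ : ℕ) (hd : 0 < d)
    (hdvd : d₁ ∣ d) (α : ℂ) (hα : α ≠ 0) (β γ : ℤ) (c : Fin d → ℂ)
    (hc : ∀ l : Fin d, c l =
      α * eta d ^ (β * (l : ℕ)) * (if ((l : ℕ) + γ) % (d₁ : ℤ) = 0 then 1 else 0)) :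
    suppCard d c * suppCard d (dft d c) = d := by
  have hη := eta_ne_zero d
  have hd₁ : 0 < d₁ := Nat.pos_of_dvd_of_pos hdvd hd
  have h1 : suppCard d c = d / d₁ := by
    rw [suppCard, ← residue_count d d₁ hdvd hd γ]
    congr 1
    apply Finset.filter_congr
    intro l _
    rw [hc l]
    constructor
    · intro h
      by_contra hcond
      simp [hcond] at h
    · intro h
      simp only [h, if_pos, mul_one]
      exact mul_ne_zero hα (zpow_ne_zero _ hη)
  have h2 : suppCard d (dft d c) = d / (d / d₁) := by
    rw [suppCard, ← residue_count d (d / d₁) (Nat.div_dvd_of_dvd hdvd) hd β]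
    congr 1
    apply Finset.filter_congr
    intro k _
    rw [dft_ne_zero_iff d d₁ hd hdvd α hα β γ c hc k]
  rw [h1, h2, Nat.div_div_self hdvd hd.ne', Nat.div_mul_cancel hdvd]
end

section
/- For any nonzero vector c ∈ ℂ^d achieving equality |supp(c)| · |supp(ĉ)| = d in the discrete support uncertainty relation, c has the form c_l = α · η^{βl} · δ_{0,(l+γ) mod d₁} for some divisor d₁ of d, nonzero α ∈ ℂ, and integers β, γ. -/
open scoped BigOperators Classical ComplexOrder

lemma eta_zpow (d : ℕ) (m : ℤ) :
    eta d ^ m = Complex.exp (m * (2 * (Real.pi : ℂ) * Complex.I / d)) := by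
  rw [eta, ← Complex.exp_int_mul]

lemma two_pi_I_ne_zero : (2 : ℂ) * Real.pi * Complex.I ≠ 0 := by
  simp [Complex.I_ne_zero, Real.pi_ne_zero, Complex.ofReal_ne_zero]

lemma eta_pow_d (d : ℕ) (hd : 0 < d) : eta d ^ (d : ℤ) = 1 := by
  rw [eta_zpow]
  have hdC : (d : ℂ) ≠ 0 := Nat.cast_ne_zero.mpr hd.ne'
  have : ((d : ℤ) : ℂ) * (2 * (Real.pi : ℂ) * Complex.I / d) = 2 * Real.pi * Complex.I := by
    push_cast; field_simp
  rw [this, Complex.exp_two_pi_mul_I]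

lemma eta_zpow_eq_one_iff (d : ℕ) (hd : 0 < d) (m : ℤ) : eta d ^ m = 1 ↔ (d : ℤ) ∣ m := by
  rw [eta_zpow, Complex.exp_eq_one_iff]
  have hdC : (d : ℂ) ≠ 0 := Nat.cast_ne_zero.mpr hd.ne'
  constructor
  · rintro ⟨n, hn⟩
    refine ⟨n, ?_⟩
    have h : (m : ℂ) = n * d := by
      have h2 := two_pi_I_ne_zero
      field_simp at hn
      apply mul_right_cancel₀ h2
      rw [hn]; ring
    have : m = n * (d:ℤ) := by exact_mod_cast h
    exact this.trans (mul_comm _ _)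
  · rintro ⟨n, hn⟩
    refine ⟨n, ?_⟩
    rw [hn]
    push_cast
    field_simp

lemma conj_eta (d : ℕ) : (starRingEnd ℂ) (eta d) = (eta d)⁻¹ := by
  rw [eta, ← Complex.exp_conj, ← Complex.exp_neg]
  congr 1
  simp [map_div₀, Complex.conj_I, map_ofNat]
  ring

lemma conj_eta_pow (d n : ℕ) : (starRingEnd ℂ) (eta d ^ n) = eta d ^ (-(n : ℤ)) := by
  rw [map_pow, conj_eta, zpow_neg, zpow_natCast, inv_pow]

lemma eta_geom (d : ℕ) (hd : 0 < d) (m : ℤ) :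
    ∑ k : Fin d, (eta d ^ m) ^ (k : ℕ) = if (d : ℤ) ∣ m then (d : ℂ) else 0 := by
  split_ifs with h
  · rw [(eta_zpow_eq_one_iff d hd m).mpr h]
    simp
  · have hζ : eta d ^ m ≠ 1 := fun hh => h ((eta_zpow_eq_one_iff d hd m).mp hh)
    rw [Fin.sum_univ_eq_sum_range (fun k => (eta d ^ m) ^ k), geom_sum_eq hζ]
    have : (eta d ^ m) ^ d = 1 := by
      rw [← zpow_natCast (eta d ^ m) d, ← zpow_mul, mul_comm, zpow_mul, eta_pow_d d hd, one_zpow]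
    rw [this]
    simp

lemma abs_eta (d : ℕ) : ‖eta d‖ = 1 := by
  rw [eta, Complex.norm_exp]
  have h : (2 * (Real.pi : ℂ) * Complex.I / d).re = 0 := by
    have : (2 * (Real.pi : ℂ) * Complex.I / d) = ((2 * Real.pi / d : ℝ) : ℂ) * Complex.I := by
      push_cast; ring
    rw [this]
    simp
  rw [h, Real.exp_zero]

lemma fin_dvd_iff (d : ℕ) (l l' : Fin d) : ((d:ℤ) ∣ ((l:ℤ) - (l':ℤ))) ↔ l' = l := by
  constructor
  · intro h
    have h1 : ((l:ℤ) - (l':ℤ)) = 0 := by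
      apply Int.eq_zero_of_abs_lt_dvd h
      have := l.2
      have := l'.2
      rw [abs_lt]
      omega
    have : (l:ℤ) = (l':ℤ) := by omega
    exact (Fin.ext (by exact_mod_cast this.symm))
  · rintro rfl; simp

/-- The key pointwise identity for products of DFT terms. -/
lemma W_conj (d : ℕ) (c : Fin d → ℂ) (k l l' : Fin d) :
    (eta d ^ ((k:ℕ)*(l:ℕ)) * c l) * ((starRingEnd ℂ) (eta d ^ ((k:ℕ)*(l':ℕ)) * c l'))
      = c l * (starRingEnd ℂ) (c l') * (eta d ^ ((l:ℤ)-(l':ℤ)))^(k:ℕ) := by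
  rw [map_mul, conj_eta_pow]
  have hpow : eta d ^ ((((k:ℕ)*(l:ℕ) : ℕ)) : ℤ) * eta d ^ (-(((k:ℕ)*(l':ℕ) : ℕ) : ℤ))
      = (eta d ^ ((l:ℤ)-(l':ℤ)))^((k:ℕ)) := by
    rw [← zpow_natCast (eta d ^ ((l:ℤ)-(l':ℤ))), ← zpow_mul, ← zpow_add₀ (eta_ne_zero d)]
    congr 1
    push_cast
    ring
  rw [← zpow_natCast (eta d) ((k:ℕ)*(l:ℕ)), mul_mul_mul_comm, hpow]
  ring

lemma plancherel (d : ℕ) (hd : 0 < d) (c : Fin d → ℂ) :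
    ∑ k : Fin d, Complex.normSq (dft d c k) = ∑ l : Fin d, Complex.normSq (c l) := by
  have hdC : (d : ℂ) ≠ 0 := Nat.cast_ne_zero.mpr hd.ne'
  have key : ∑ k : Fin d, (dft d c k * (starRingEnd ℂ) (dft d c k))
      = ∑ l : Fin d, (c l * (starRingEnd ℂ) (c l)) := by
    have hpre : (1 / ((Real.sqrt d : ℝ) : ℂ)) * (starRingEnd ℂ) (1 / ((Real.sqrt d : ℝ) : ℂ))
        = 1 / (d : ℂ) := by
      rw [map_div₀, map_one, Complex.conj_ofReal, div_mul_div_comm, one_mul,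
        ← Complex.ofReal_mul, Real.mul_self_sqrt (Nat.cast_nonneg d), Complex.ofReal_natCast]
    calc ∑ k : Fin d, (dft d c k * (starRingEnd ℂ) (dft d c k))
        = ∑ k : Fin d, (1/(d:ℂ)) * ∑ l : Fin d, ∑ l' : Fin d,
            c l * (starRingEnd ℂ) (c l') * (eta d ^ ((l:ℤ)-(l':ℤ)))^(k:ℕ) := by
          apply Finset.sum_congr rfl
          intro k _
          rw [dft, map_mul, mul_mul_mul_comm, hpre, map_sum, Finset.sum_mul_sum]
          congr 1
          exact Finset.sum_congr rfl fun l _ => Finset.sum_congr rfl fun l' _ => W_conj d c k l l'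
      _ = (1/(d:ℂ)) * ∑ l : Fin d, ∑ l' : Fin d,
            c l * (starRingEnd ℂ) (c l') * ∑ k : Fin d, (eta d ^ ((l:ℤ)-(l':ℤ)))^(k:ℕ) := by
          rw [← Finset.mul_sum]
          congr 1
          rw [Finset.sum_comm]
          apply Finset.sum_congr rfl
          intro l _
          rw [Finset.sum_comm]
          apply Finset.sum_congr rfl
          intro l' _
          rw [← Finset.mul_sum]
      _ = (1/(d:ℂ)) * ∑ l : Fin d, ∑ l' : Fin d,
            (if l' = l then c l * (starRingEnd ℂ) (c l') * d else 0) := by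
          congr 1
          apply Finset.sum_congr rfl
          intro l _
          apply Finset.sum_congr rfl
          intro l' _
          rw [eta_geom d hd]
          by_cases h : l' = l
          · rw [if_pos ((fin_dvd_iff d l l').mpr h), if_pos h]
          · rw [if_neg (fun hh => h ((fin_dvd_iff d l l').mp hh)), if_neg h, mul_zero]
      _ = ∑ l : Fin d, (c l * (starRingEnd ℂ) (c l)) := by
          rw [Finset.mul_sum]
          apply Finset.sum_congr rfl
          intro l _
          rw [Finset.sum_ite_eq' Finset.univ l (fun l' => c l * (starRingEnd ℂ) (c l') * d),
            if_pos (Finset.mem_univ l)]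
          field_simp
  have key' : ∑ k : Fin d, ((Complex.normSq (dft d c k) : ℝ) : ℂ)
      = ∑ l : Fin d, ((Complex.normSq (c l) : ℝ) : ℂ) := by
    simpa only [Complex.mul_conj] using key
  exact_mod_cast key'

lemma re_eq_ofReal_abs {z : ℂ} (h : z.re = ‖z‖) : z = ((‖z‖ : ℝ) : ℂ) := by
  have hsq : ‖z‖ ^ 2 = z.re * z.re + z.im * z.im := by
    rw [Complex.sq_norm, Complex.normSq_apply]
  have him : z.im = 0 := by
    have h' := hsq
    rw [← h] at h'
    have : z.im * z.im = 0 := by nlinarith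
    exact mul_self_eq_zero.mp this
  rw [← h]
  exact Complex.ext rfl (by simp [him])

/-- If `d` divides `f k * y` for all `k ∈ S`, then `d` divides `gcd(d, gcd f) * y`. -/
lemma dvd_gcd_mul_nat {ι : Type*} (d : ℕ) (S : Finset ι) (f : ι → ℕ) (y : ℕ)
    (h : ∀ k ∈ S, d ∣ f k * y) : d ∣ Nat.gcd d (S.gcd f) * y := by
  rw [← Nat.gcd_mul_right]
  apply Nat.dvd_gcd (Dvd.intro y rfl)
  have : S.gcd f * y = S.gcd (fun k => f k * y) := by
    rw [Finset.gcd_mul_right]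
    simp
  rw [this]
  exact Finset.dvd_gcd h

/-- Counting points of an arithmetic progression in `Fin d`. -/
lemma card_AP_le (d m : ℕ) (hd : 0 < d) (hm : 0 < m) (hmd : m ∣ d) (r : ℤ) :
    (Finset.univ.filter fun l : Fin d => (m:ℤ) ∣ ((l:ℤ) - r)).card ≤ d / m := by
  classical
  have hdZ : (0:ℤ) < d := by exact_mod_cast hd
  have hmZ : (0:ℤ) < m := by exact_mod_cast hm
  rw [← Finset.card_range (d/m)]
  refine Finset.card_le_card_of_injOn (fun l => ((((l:ℤ) - r) % d) / m).toNat) ?_ ?_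
  · intro l hl
    rw [Finset.mem_coe, Finset.mem_filter] at hl
    set x : ℤ := ((l:ℤ) - r) % d with hx
    have hx0 : 0 ≤ x := Int.emod_nonneg _ hdZ.ne'
    have hxd : x < d := Int.emod_lt_of_pos _ hdZ
    have hmx : (m:ℤ) ∣ x := by
      rw [hx, Int.emod_def]
      exact dvd_sub hl.2 (Dvd.dvd.mul_right (Int.natCast_dvd_natCast.mpr hmd) _)
    have hmdZ : (m:ℤ) ∣ (d:ℤ) := Int.natCast_dvd_natCast.mpr hmd
    have hdiv : x / m < (d:ℤ) / m := by
      apply lt_of_mul_lt_mul_left (a := (m:ℤ)) ?_ hmZ.le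
      rwa [Int.mul_ediv_cancel' hmx, Int.mul_ediv_cancel' hmdZ]
    have hdiv0 : 0 ≤ x / m := Int.ediv_nonneg hx0 hmZ.le
    have hcast : ((d/m : ℕ) : ℤ) = (d:ℤ) / m := Int.natCast_div d m
    rw [Finset.mem_coe, Finset.mem_range]
    show ((((l:ℤ) - r) % (d:ℤ)) / (m:ℤ)).toNat < d / m
    rw [← hx]
    omega
  · intro l hl l' hl' hll'
    simp only [Finset.coe_filter, Set.mem_setOf_eq] at hl hl'
    replace hll' : ((((l:ℤ) - r) % (d:ℤ)) / (m:ℤ)).toNat = ((((l':ℤ) - r) % (d:ℤ)) / (m:ℤ)).toNat := hll'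
    set x : ℤ := ((l:ℤ) - r) % d with hx
    set x' : ℤ := ((l':ℤ) - r) % d with hx'
    have hx0 : 0 ≤ x := Int.emod_nonneg _ hdZ.ne'
    have hx'0 : 0 ≤ x' := Int.emod_nonneg _ hdZ.ne'
    have hmx : (m:ℤ) ∣ x := by
      rw [hx, Int.emod_def]
      exact dvd_sub hl.2 (Dvd.dvd.mul_right (Int.natCast_dvd_natCast.mpr hmd) _)
    have hmx' : (m:ℤ) ∣ x' := by
      rw [hx', Int.emod_def]
      exact dvd_sub hl'.2 (Dvd.dvd.mul_right (Int.natCast_dvd_natCast.mpr hmd) _)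
    have hdd : x / m = x' / m := by
      have h0 : 0 ≤ x / m := Int.ediv_nonneg hx0 hmZ.le
      have h0' : 0 ≤ x' / m := Int.ediv_nonneg hx'0 hmZ.le
      omega
    have hxx : x = x' := by
      rw [← Int.mul_ediv_cancel' hmx, ← Int.mul_ediv_cancel' hmx', hdd]
    have : (d:ℤ) ∣ ((l:ℤ) - (l':ℤ)) := by
      have : ((l:ℤ) - r) % d = ((l':ℤ) - r) % d := hxx
      have h2 := Int.sub_emod ((l:ℤ) - r) ((l':ℤ) - r) d
      rw [← this, sub_self] at h2
      have h3 : (((l:ℤ) - r) - ((l':ℤ) - r)) = (l:ℤ) - (l':ℤ) := by ring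
      rw [h3] at h2
      exact Int.dvd_of_emod_eq_zero ((Int.emod_emod_of_dvd _ dvd_rfl) ▸ h2.symm ▸ (Int.zero_emod d))
    exact ((fin_dvd_iff d l l').mp this).symm
theorem form_of_support_uncertainty_equality (d : ℕ) (c : Fin d → ℂ) (hc : c ≠ 0)
    (heq : suppCard d c * suppCard d (dft d c) = d) :
    ∃ (d₁ : ℕ) (α : ℂ) (β γ : ℤ), d₁ ∣ d ∧ α ≠ 0 ∧
      ∀ l : Fin d, c l =
        α * eta d ^ (β * (l : ℕ)) * (if ((l : ℕ) + γ) % (d₁ : ℤ) = 0 then 1 else 0) := by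
  classical
  have hex : ∃ l, c l ≠ 0 := by
    by_contra hno
    push_neg at hno
    exact hc (funext fun l => hno l)
  obtain ⟨lw, hlw⟩ := hex
  have hd : 0 < d := lw.pos
  have hdR : (0:ℝ) < d := by exact_mod_cast hd
  set T : Finset (Fin d) := Finset.univ.filter (fun l => c l ≠ 0) with hTdef
  set Ω : Finset (Fin d) := Finset.univ.filter (fun k => dft d c k ≠ 0) with hΩdef
  have heqTΩ : T.card * Ω.card = d := heq
  have hlwT : lw ∈ T := Finset.mem_filter.mpr ⟨Finset.mem_univ _, hlw⟩
  have hΩc0 : Ω.card ≠ 0 := fun h => by rw [h, mul_zero] at heqTΩ; omega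
  obtain ⟨k₀, hk₀⟩ := Finset.card_pos.mp (Nat.pos_of_ne_zero hΩc0)
  set W : Fin d → Fin d → ℂ := fun k l => eta d ^ ((k:ℕ)*(l:ℕ)) * c l with hWdef
  have hWabs : ∀ k l, ‖W k l‖ = ‖c l‖ := by
    intro k l
    rw [hWdef]
    simp only [norm_mul, norm_pow, abs_eta, one_pow, one_mul]
  set M : ℝ := ∑ l ∈ T, Complex.normSq (c l) with hMdef
  have hMrestrict : ∑ l : Fin d, Complex.normSq (c l) = M := by
    rw [hMdef]
    refine (Finset.sum_subset (Finset.subset_univ T) (fun x _ hx => ?_)).symm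
    have hx0 : c x = 0 := by
      by_contra hne
      exact hx (Finset.mem_filter.mpr ⟨Finset.mem_univ _, hne⟩)
    simp [hx0]
  have hMpos : 0 < M :=
    Finset.sum_pos' (fun l _ => Complex.normSq_nonneg _)
      ⟨lw, hlwT, Complex.normSq_pos.mpr hlw⟩
  have hdftsum : ∀ k, dft d c k = (1 / (Real.sqrt d : ℂ)) * ∑ l ∈ T, W k l := by
    intro k
    rw [dft]
    congr 1
    refine (Finset.sum_subset (Finset.subset_univ T) (fun x _ hx => ?_)).symm
    have hx0 : c x = 0 := by
      by_contra hne
      exact hx (Finset.mem_filter.mpr ⟨Finset.mem_univ _, hne⟩)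
    simp [hx0]
  have hdN : ∀ k, (d:ℝ) * Complex.normSq (dft d c k) = Complex.normSq (∑ l ∈ T, W k l) := by
    intro k
    rw [hdftsum k, Complex.normSq_mul]
    have h1 : Complex.normSq (1 / (Real.sqrt d : ℂ)) = 1/d := by
      rw [Complex.normSq_div, Complex.normSq_one, Complex.normSq_ofReal,
        Real.mul_self_sqrt (Nat.cast_nonneg d)]
    rw [h1]
    field_simp
  have hexpand : ∀ k, Complex.normSq (∑ l ∈ T, W k l)
      = ∑ p ∈ T ×ˢ T, (W k p.1 * (starRingEnd ℂ) (W k p.2)).re := by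
    intro k
    have h1 : ((∑ l ∈ T, W k l) * (starRingEnd ℂ) (∑ l ∈ T, W k l))
        = ∑ p ∈ T ×ˢ T, (W k p.1 * (starRingEnd ℂ) (W k p.2)) := by
      rw [map_sum, Finset.sum_mul_sum, ← Finset.sum_product']
    calc Complex.normSq (∑ l ∈ T, W k l)
        = ((∑ l ∈ T, W k l) * (starRingEnd ℂ) (∑ l ∈ T, W k l)).re := by
          rw [Complex.mul_conj]; simp
      _ = _ := by rw [h1, Complex.re_sum]
  set G : Fin d × Fin d → ℝ := fun p => ‖c p.1‖ * ‖c p.2‖ with hGdef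
  set H : Fin d × Fin d → ℝ :=
    fun p => (Complex.normSq (c p.1) + Complex.normSq (c p.2))/2 with hHdef
  have hfg : ∀ k p, (W k p.1 * (starRingEnd ℂ) (W k p.2)).re ≤ G p := by
    intro k p
    calc (W k p.1 * (starRingEnd ℂ) (W k p.2)).re
        ≤ ‖W k p.1 * (starRingEnd ℂ) (W k p.2)‖ := Complex.re_le_norm _
      _ = G p := by rw [norm_mul, Complex.norm_conj, hWabs, hWabs]
  have hgh : ∀ p, G p ≤ H p := by
    intro p
    have h1 : ‖c p.1‖^2 = Complex.normSq (c p.1) := Complex.sq_norm _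
    have h2 : ‖c p.2‖^2 = Complex.normSq (c p.2) := Complex.sq_norm _
    have h3 := sq_nonneg (‖c p.1‖ - ‖c p.2‖)
    rw [hGdef, hHdef]
    nlinarith
  have hhsum : ∑ p ∈ T ×ˢ T, H p = T.card * M := by
    rw [Finset.sum_product]
    have hinner : ∀ l, ∑ l' ∈ T, H (l, l')
        = ((T.card : ℝ) * Complex.normSq (c l) + M)/2 := by
      intro l
      rw [hHdef]
      simp only
      rw [← Finset.sum_div, Finset.sum_add_distrib, Finset.sum_const, nsmul_eq_mul, ← hMdef]
    rw [Finset.sum_congr rfl (fun l _ => hinner l), ← Finset.sum_div,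
      Finset.sum_add_distrib, ← Finset.mul_sum, Finset.sum_const, nsmul_eq_mul, ← hMdef]
    ring
  have hup : ∀ k, Complex.normSq (dft d c k) ≤ (T.card : ℝ) * M / d := by
    intro k
    have h1 : (d:ℝ) * Complex.normSq (dft d c k) ≤ T.card * M := by
      rw [hdN k, hexpand k]
      calc ∑ p ∈ T ×ˢ T, (W k p.1 * (starRingEnd ℂ) (W k p.2)).re
          ≤ ∑ p ∈ T ×ˢ T, G p := Finset.sum_le_sum (fun p _ => hfg k p)
        _ ≤ ∑ p ∈ T ×ˢ T, H p := Finset.sum_le_sum (fun p _ => hgh p)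
        _ = T.card * M := hhsum
    rw [le_div_iff₀ hdR]
    linarith
  have hPlan : ∑ k ∈ Ω, Complex.normSq (dft d c k) = M := by
    rw [Finset.sum_subset (Finset.subset_univ Ω) (fun x _ hx => ?_),
      plancherel d hd c, hMrestrict]
    have hx0 : dft d c x = 0 := by
      by_contra hne
      exact hx (Finset.mem_filter.mpr ⟨Finset.mem_univ _, hne⟩)
    simp [hx0]
  have hkey : ∀ k ∈ Ω, Complex.normSq (dft d c k) = (T.card : ℝ) * M / d := by
    have hcast : (T.card:ℝ) * (Ω.card:ℝ) = d := by exact_mod_cast heqTΩ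
    have hsum2 : ∑ _k ∈ Ω, ((T.card : ℝ) * M / d) = M := by
      rw [Finset.sum_const, nsmul_eq_mul]
      field_simp
      nlinarith [hcast]
    exact (Finset.sum_eq_sum_iff_of_le (fun k _ => hup k)).mp (hPlan.trans hsum2.symm)
  have hpairsum : ∀ k ∈ Ω, ∑ p ∈ T ×ˢ T, (W k p.1 * (starRingEnd ℂ) (W k p.2)).re
      = ∑ p ∈ T ×ˢ T, H p := by
    intro k hk
    rw [hhsum, ← hexpand k, ← hdN k, hkey k hk]
    field_simp
  have hpair : ∀ k ∈ Ω, ∀ p ∈ T ×ˢ T,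
      (W k p.1 * (starRingEnd ℂ) (W k p.2)).re = G p ∧ G p = H p := by
    intro k hk
    have hFG : ∑ p ∈ T ×ˢ T, (W k p.1 * (starRingEnd ℂ) (W k p.2)).re
        = ∑ p ∈ T ×ˢ T, G p := by
      apply le_antisymm (Finset.sum_le_sum (fun p _ => hfg k p))
      rw [hpairsum k hk]
      exact Finset.sum_le_sum (fun p _ => hgh p)
    have hGH : ∑ p ∈ T ×ˢ T, G p = ∑ p ∈ T ×ˢ T, H p := by
      rw [← hFG]; exact hpairsum k hk
    intro p hp
    exact ⟨(Finset.sum_eq_sum_iff_of_le (fun p _ => hfg k p)).mp hFG p hp,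
      (Finset.sum_eq_sum_iff_of_le (fun p _ => hgh p)).mp hGH p hp⟩
  have habs : ∀ l ∈ T, ∀ l' ∈ T, ‖c l‖ = ‖c l'‖ := by
    intro l hl l' hl'
    have h1 := (hpair k₀ hk₀ (l, l') (Finset.mem_product.mpr ⟨hl, hl'⟩)).2
    rw [hGdef, hHdef] at h1
    simp only at h1
    have h2 : ‖c l‖^2 = Complex.normSq (c l) := Complex.sq_norm _
    have h3 : ‖c l'‖^2 = Complex.normSq (c l') := Complex.sq_norm _
    nlinarith [h1, h2, h3]
  have hWrel : ∀ k ∈ Ω, ∀ l ∈ T, ∀ l' ∈ T,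
      c l * (starRingEnd ℂ) (c l') * (eta d ^ ((l:ℤ)-(l':ℤ)))^(k:ℕ)
        = ((‖c l‖ * ‖c l'‖ : ℝ) : ℂ) := by
    intro k hk l hl l' hl'
    have hre := (hpair k hk (l, l') (Finset.mem_product.mpr ⟨hl, hl'⟩)).1
    set z := W k l * (starRingEnd ℂ) (W k l') with hz
    have habsz : ‖z‖ = ‖c l‖ * ‖c l'‖ := by
      rw [hz, norm_mul, Complex.norm_conj, hWabs, hWabs]
    have hzz : z = ((‖z‖ : ℝ):ℂ) := re_eq_ofReal_abs (by rw [habsz]; exact hre)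
    calc c l * (starRingEnd ℂ) (c l') * (eta d ^ ((l:ℤ)-(l':ℤ)))^(k:ℕ)
        = z := (W_conj d c k l l').symm
      _ = ((‖z‖ : ℝ):ℂ) := hzz
      _ = _ := by rw [habsz]
  have hdvd : ∀ k ∈ Ω, ∀ k' ∈ Ω, ∀ l ∈ T, ∀ l' ∈ T,
      (d:ℤ) ∣ ((l:ℤ)-(l':ℤ)) * ((k:ℤ)-(k':ℤ)) := by
    intro k hk k' hk' l hl l' hl'
    have h1 := hWrel k hk l hl l' hl'
    have h2 := hWrel k' hk' l hl l' hl'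
    have hcl : c l ≠ 0 := (Finset.mem_filter.mp hl).2
    have hcl' : (starRingEnd ℂ) (c l') ≠ 0 := by
      simpa using (Finset.mem_filter.mp hl').2
    have hne : c l * (starRingEnd ℂ) (c l') ≠ 0 := mul_ne_zero hcl hcl'
    have h3 : (eta d ^ ((l:ℤ)-(l':ℤ)))^(k:ℕ) = (eta d ^ ((l:ℤ)-(l':ℤ)))^(k':ℕ) :=
      mul_left_cancel₀ hne (h1.trans h2.symm)
    have hbase : eta d ^ ((l:ℤ)-(l':ℤ)) ≠ 0 := zpow_ne_zero _ (eta_ne_zero d)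
    have hη : eta d ^ (((l:ℤ)-(l':ℤ)) * ((k:ℤ)-(k':ℤ))) = 1 := by
      rw [zpow_mul, zpow_sub₀ hbase, zpow_natCast, zpow_natCast, h3,
        div_self (pow_ne_zero _ hbase)]
    exact (eta_zpow_eq_one_iff d hd _).mp hη
  have hform : ∀ l ∈ T, c l = c lw * eta d ^ (-(k₀:ℤ) * ((l:ℤ)-(lw:ℤ))) := by
    intro l hl
    have h1 := hWrel k₀ hk₀ l hl lw hlwT
    have habs' : ‖c l‖ = ‖c lw‖ := habs l hl lw hlwT
    have hrhs : ((‖c l‖ * ‖c lw‖ : ℝ) : ℂ)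
        = c lw * (starRingEnd ℂ) (c lw) := by
      rw [habs', ← pow_two, Complex.sq_norm, Complex.mul_conj]
    rw [hrhs] at h1
    have hconj : (starRingEnd ℂ) (c lw) ≠ 0 := by simpa using hlw
    have h2 : c l * (eta d ^ ((l:ℤ)-(lw:ℤ)))^(k₀:ℕ) = c lw := by
      apply mul_right_cancel₀ hconj
      calc c l * (eta d ^ ((l:ℤ)-(lw:ℤ)))^(k₀:ℕ) * (starRingEnd ℂ) (c lw)
          = c l * (starRingEnd ℂ) (c lw) * (eta d ^ ((l:ℤ)-(lw:ℤ)))^(k₀:ℕ) := by ring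
        _ = c lw * (starRingEnd ℂ) (c lw) := h1
    have hbase : eta d ^ ((l:ℤ)-(lw:ℤ)) ≠ 0 := zpow_ne_zero _ (eta_ne_zero d)
    have hXinv : ((eta d ^ ((l:ℤ)-(lw:ℤ)))^(k₀:ℕ))⁻¹
        = eta d ^ (-(k₀:ℤ) * ((l:ℤ)-(lw:ℤ))) := by
      rw [← zpow_natCast (eta d ^ ((l:ℤ)-(lw:ℤ))) (k₀:ℕ), ← zpow_mul, ← zpow_neg]
      congr 1
      ring
    rw [← h2, mul_assoc, ← hXinv, mul_inv_cancel₀ (pow_ne_zero _ hbase), mul_one]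
  -- Number theory part
  set g : ℕ := Ω.gcd (fun k => ((k:ℤ) - (k₀:ℤ)).natAbs) with hgdef
  set e : ℕ := Nat.gcd d g with hedef
  have hed : e ∣ d := Nat.gcd_dvd_left _ _
  have hepos : 0 < e := Nat.gcd_pos_of_pos_left _ hd
  set m : ℕ := d / e with hmdef
  have hmd : m ∣ d := Nat.div_dvd_of_dvd hed
  have hmpos : 0 < m := Nat.div_pos (Nat.le_of_dvd hd hed) hepos
  have hem : e * m = d := Nat.mul_div_cancel' hed
  have hTsub : T ⊆ Finset.univ.filter (fun l : Fin d => (m:ℤ) ∣ ((l:ℤ) - (lw:ℤ))) := by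
    intro l hl
    refine Finset.mem_filter.mpr ⟨Finset.mem_univ _, ?_⟩
    have hdall : ∀ k ∈ Ω, d ∣ ((k:ℤ) - (k₀:ℤ)).natAbs * ((l:ℤ)-(lw:ℤ)).natAbs := by
      intro k hk
      have h1 := hdvd k hk k₀ hk₀ l hl lw hlwT
      have h2 : d ∣ (((l:ℤ)-(lw:ℤ)) * ((k:ℤ)-(k₀:ℤ))).natAbs := Int.natCast_dvd.mp h1
      rwa [Int.natAbs_mul, Nat.mul_comm] at h2
    have hgcd := dvd_gcd_mul_nat d Ω (fun k => ((k:ℤ) - (k₀:ℤ)).natAbs)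
      (((l:ℤ)-(lw:ℤ)).natAbs) hdall
    rw [← hgdef, ← hedef] at hgcd
    have h3 : (d:ℤ) ∣ (e:ℤ) * ((l:ℤ)-(lw:ℤ)) := by
      rw [Int.natCast_dvd, Int.natAbs_mul, Int.natAbs_natCast]
      exact hgcd
    have h4 : (e:ℤ) * (m:ℤ) ∣ (e:ℤ) * ((l:ℤ)-(lw:ℤ)) := by
      have : ((e * m : ℕ) : ℤ) = (e:ℤ) * (m:ℤ) := by push_cast; ring
      rw [← this, hem]
      exact h3
    exact (mul_dvd_mul_iff_left (show (e:ℤ) ≠ 0 by exact_mod_cast hepos.ne')).mp h4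
  have hΩsub : Ω ⊆ Finset.univ.filter (fun k : Fin d => (e:ℤ) ∣ ((k:ℤ) - (k₀:ℤ))) := by
    intro k hk
    refine Finset.mem_filter.mpr ⟨Finset.mem_univ _, ?_⟩
    have h1 : e ∣ ((k:ℤ) - (k₀:ℤ)).natAbs :=
      (Nat.gcd_dvd_right d g).trans (Finset.gcd_dvd hk)
    exact Int.natCast_dvd.mpr h1
  have hTcard : T.card ≤ e := by
    refine le_trans (Finset.card_le_card hTsub) ?_
    have h1 := card_AP_le d m hd hmpos hmd (lw:ℤ)
    have h2 : d / m = e := by rw [hmdef, Nat.div_div_self hed hd.ne']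
    omega
  have hΩcard : Ω.card ≤ m := by
    refine le_trans (Finset.card_le_card hΩsub) ?_
    exact card_AP_le d e hd hepos hed (k₀:ℤ)
  have hΩpos : 0 < Ω.card := Nat.pos_of_ne_zero hΩc0
  have hTpos : 0 < T.card := Finset.card_pos.mpr ⟨lw, hlwT⟩
  have hOm : Ω.card = m := by
    have h1 : e * m = T.card * Ω.card := by rw [hem, heqTΩ]
    have h2 : T.card * Ω.card ≤ e * Ω.card := Nat.mul_le_mul_right _ hTcard
    have h3 : e * Ω.card ≤ e * m := Nat.mul_le_mul_left _ hΩcard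
    have h4 : e * Ω.card = e * m := le_antisymm h3 (by omega)
    exact (Nat.eq_of_mul_eq_mul_left hepos h4).symm ▸ rfl
  have hTe : T.card = e := by
    have h1 : T.card * Ω.card = e * m := by rw [hem, heqTΩ]
    rw [hOm] at h1
    exact Nat.eq_of_mul_eq_mul_right hmpos h1
  have hTfull : T = Finset.univ.filter (fun l : Fin d => (m:ℤ) ∣ ((l:ℤ) - (lw:ℤ))) := by
    apply Finset.eq_of_subset_of_card_le hTsub
    have h1 := card_AP_le d m hd hmpos hmd (lw:ℤ)
    have h2 : d / m = e := by rw [hmdef, Nat.div_div_self hed hd.ne']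
    omega
  refine ⟨m, c lw * eta d ^ ((k₀:ℤ) * ((lw:ℕ):ℤ)), -(k₀:ℤ), -((lw:ℕ):ℤ), hmd,
    mul_ne_zero hlw (zpow_ne_zero _ (eta_ne_zero d)), ?_⟩
  intro l
  by_cases hlT : l ∈ T
  · have hdv : (m:ℤ) ∣ ((l:ℤ) - (lw:ℤ)) := by
      have := hTfull ▸ hlT
      exact (Finset.mem_filter.mp this).2
    have hifc : (((l:ℕ):ℤ) + -((lw:ℕ):ℤ)) % (m:ℤ) = 0 := by
      apply Int.emod_eq_zero_of_dvd
      rwa [← sub_eq_add_neg]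
    rw [if_pos hifc, mul_one, hform l hlT, mul_assoc, ← zpow_add₀ (eta_ne_zero d)]
    congr 1
    congr 1
    ring
  · have hc0 : c l = 0 := by
      by_contra hne
      exact hlT (Finset.mem_filter.mpr ⟨Finset.mem_univ _, hne⟩)
    have hnd : ¬ ((((l:ℕ):ℤ) + -((lw:ℕ):ℤ)) % (m:ℤ) = 0) := by
      intro hcontra
      apply hlT
      rw [hTfull]
      refine Finset.mem_filter.mpr ⟨Finset.mem_univ _, ?_⟩
      rw [sub_eq_add_neg]
      exact Int.dvd_of_emod_eq_zero hcontra
    rw [hc0, if_neg hnd, mul_zero]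
end
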